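/- Under the hypotheses of Proposition 1 — h₀ : ℝ → ℝ differentiable, F : ℝ → ℝ → ℝ continuously differentiable with ∂F/∂t (t,h) = E(t,h), y : ℝ × ℝ → ℝ differentiable satisfying x = y(x,t) + F(t, h₀(y(x,t))) for all (x,t), and 1 + (∂F/∂h)(t, h₀(y(x,t))) · h₀'(y(x,t)) ≠ 0 — the function y is transported by the characteristic speed q(x,t) := E(t, h₀(y(x,t))): that is, ∂y/∂t (x,t) + q(x,t) · ∂y/∂x (x,t) = 0 for all (x,t). -/

import Mathlib

/-- Key identity in the proof of Proposition 1: the foot of the characteristic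
`y` is transported by the characteristic speed `q(x,t) = E (t, h₀ (y (x,t)))`. -/
theorem stmt_3 (h₀ : ℝ → ℝ) (hh₀ : Differentiable ℝ h₀)
    (E F : ℝ → ℝ → ℝ)
    (hF : ContDiff ℝ 1 (fun p : ℝ × ℝ => F p.1 p.2))
    (hFt : ∀ t h : ℝ, deriv (fun t => F t h) t = E t h)
    (y : ℝ × ℝ → ℝ) (hy : Differentiable ℝ y)
    (hrel : ∀ x t : ℝ, x = y (x, t) + F t (h₀ (y (x, t))))
    (hne : ∀ x t : ℝ,
      1 + deriv (fun h => F t h) (h₀ (y (x, t))) * deriv h₀ (y (x, t)) ≠ 0) :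
    ∀ x t : ℝ,
      deriv (fun τ => y (x, τ)) t
        + E t (h₀ (y (x, t))) * deriv (fun ξ => y (ξ, t)) x = 0 := by
  intro x t
  set f : ℝ × ℝ → ℝ := fun p => F p.1 p.2 with hf
  have hfd : Differentiable ℝ f := hF.differentiable one_ne_zero
  set yv : ℝ := y (x, t) with hyv
  set A := fderiv ℝ f (t, h₀ yv) with hA
  set yt := deriv (fun τ => y (x, τ)) t with hyt
  set yx := deriv (fun ξ => y (ξ, t)) x with hyx
  set d := deriv h₀ yv with hd
  -- derivative facts
  have hyT : HasDerivAt (fun τ => y (x, τ)) yt t := by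
    have : DifferentiableAt ℝ (fun τ => y (x, τ)) t :=
      (hy (x, t)).comp t ((differentiableAt_const x).prodMk differentiableAt_id)
    exact this.hasDerivAt
  have hyX : HasDerivAt (fun ξ => y (ξ, t)) yx x := by
    have : DifferentiableAt ℝ (fun ξ => y (ξ, t)) x :=
      (hy (x, t)).comp x (differentiableAt_id.prodMk (differentiableAt_const t))
    exact this.hasDerivAt
  have hFA : HasFDerivAt f A (t, h₀ yv) := (hfd (t, h₀ yv)).hasFDerivAt
  -- A (1,0) = E t (h₀ yv)
  have hA10 : A (1, 0) = E t (h₀ yv) := by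
    have hc : HasDerivAt (fun τ : ℝ => (τ, h₀ yv)) ((1 : ℝ), (0 : ℝ)) t :=
      HasDerivAt.prodMk (hasDerivAt_id t) (hasDerivAt_const t _)
    have := (hFA.comp_hasDerivAt t hc).deriv
    rw [← hFt t (h₀ yv)]
    exact this.symm
  -- A (0,1) = deriv (fun h => F t h) (h₀ yv)
  have hA01 : A (0, 1) = deriv (fun h => F t h) (h₀ yv) := by
    have hc : HasDerivAt (fun h : ℝ => (t, h)) ((0 : ℝ), (1 : ℝ)) (h₀ yv) :=
      HasDerivAt.prodMk (hasDerivAt_const _ t) (hasDerivAt_id _)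
    exact (hFA.comp_hasDerivAt (h₀ yv) hc).deriv.symm
  set Fh := deriv (fun h => F t h) (h₀ yv) with hFh
  -- t-direction equation
  have hch : HasDerivAt (fun τ => h₀ (y (x, τ))) (d * yt) t :=
    (hh₀ yv).hasDerivAt.comp t hyT
  have hcT : HasDerivAt (fun τ : ℝ => (τ, h₀ (y (x, τ)))) ((1 : ℝ), d * yt) t :=
    HasDerivAt.prodMk (hasDerivAt_id t) hch
  have hFcT : HasDerivAt (fun τ => f (τ, h₀ (y (x, τ)))) (A (1, d * yt)) t :=
    by have := hFA.comp_hasDerivAt t hcT; exact this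
  have hsumT : HasDerivAt (fun τ => y (x, τ) + F τ (h₀ (y (x, τ))))
      (yt + A (1, d * yt)) t := hyT.add hFcT
  have hconstT : HasDerivAt (fun τ => y (x, τ) + F τ (h₀ (y (x, τ)))) (0 : ℝ) t := by
    have : (fun τ => y (x, τ) + F τ (h₀ (y (x, τ)))) = fun _ => x := by
      funext τ; exact (hrel x τ).symm
    rw [this]; exact hasDerivAt_const t x
  have eqT : yt + A (1, d * yt) = 0 := hsumT.unique hconstT
  -- x-direction equation
  have hchX : HasDerivAt (fun ξ => h₀ (y (ξ, t))) (d * yx) x :=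
    (hh₀ yv).hasDerivAt.comp x hyX
  have hcX : HasDerivAt (fun ξ : ℝ => ((t : ℝ), h₀ (y (ξ, t)))) ((0 : ℝ), d * yx) x :=
    HasDerivAt.prodMk (hasDerivAt_const x t) hchX
  have hFcX : HasDerivAt (fun ξ => f (t, h₀ (y (ξ, t)))) (A (0, d * yx)) x :=
    by have := hFA.comp_hasDerivAt x hcX; exact this
  have hsumX : HasDerivAt (fun ξ => y (ξ, t) + F t (h₀ (y (ξ, t))))
      (yx + A (0, d * yx)) x := hyX.add hFcX
  have hidX : HasDerivAt (fun ξ => y (ξ, t) + F t (h₀ (y (ξ, t)))) (1 : ℝ) x := by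
    have : (fun ξ => y (ξ, t) + F t (h₀ (y (ξ, t)))) = fun ξ => ξ := by
      funext ξ; exact (hrel ξ t).symm
    rw [this]; exact hasDerivAt_id x
  have eqX : yx + A (0, d * yx) = 1 := hsumX.unique hidX
  -- linearity decompositions
  have hlinT : A (1, d * yt) = E t (h₀ yv) + (d * yt) * Fh := by
    have : ((1 : ℝ), d * yt) = (1, 0) + (d * yt) • ((0 : ℝ), (1 : ℝ)) := by
      simp [Prod.ext_iff]
    rw [this, map_add, map_smul, hA10, hA01, smul_eq_mul]
  have hlinX : A (0, d * yx) = (d * yx) * Fh := by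
    have : ((0 : ℝ), d * yx) = (d * yx) • ((0 : ℝ), (1 : ℝ)) := by
      simp [Prod.ext_iff]
    rw [this, map_smul, hA01, smul_eq_mul]
  rw [hlinT] at eqT
  rw [hlinX] at eqX
  have hne' : 1 + Fh * d ≠ 0 := hne x t
  have key : (yt + E t (h₀ yv) * yx) * (1 + Fh * d) = 0 := by
    linear_combination eqT + E t (h₀ yv) * eqX
  exact (mul_eq_zero.mp key).resolve_right hne'
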